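/- Let b_1, …, b_d ∈ ℝⁿ, set ℓ_r(x) = ⟨x, b_r⟩ + 1, let Ω = {x ∈ ℝⁿ : ℓ_r(x) > 0 for all r} and P = {x ∈ ℝⁿ : ℓ_r(x) ≥ 0 for all r}, and define the Guillemin potential φ₀ : Ω → ℝ by φ₀(x) = (1/2) Σ_{r=1}^d ℓ_r(x) log ℓ_r(x). Let α ∈ ℝⁿ and let r₀ ∈ {1,…,d} satisfy ⟨α, b_{r₀}⟩ = 1 and ⟨α, b_r⟩ ≤ 0 for all r ≠ r₀. Then for every x ∈ Ω, ℓ_{r₀}(x) · exp(−⟨α, ∇φ₀(x)⟩) = exp(−(1/2) Σ_{r=1}^d ⟨α, b_r⟩) · ℓ_{r₀}(x)^{1/2} · Π_{r ≠ r₀} ℓ_r(x)^{−(1/2)⟨α, b_r⟩}, and the right-hand side defines a continuous function on all of P (with the convention 0^c = 0 for c > 0 and 0^0 = 1); in particular the left-hand side extends continuously from Ω to P. -/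

import Mathlib

/-- Partial derivative of `f` in the `j`-th coordinate direction at `x`. -/
noncomputable def pd {n : ℕ} (f : (Fin n → ℝ) → ℝ) (j : Fin n) (x : Fin n → ℝ) : ℝ :=
  fderiv ℝ f x (Pi.single j 1)

/-- Boundary-extension computation for the torus-invariant factor of a root function:
on the interior `Ω` of the polytope `P`, `ℓ_{r₀}·exp(-⟨α,∇φ₀⟩)` equals the explicit
product of powers of the defining functions, which is continuous on all of `P`
(real powers `x ^ (c : ℝ)` satisfying `0 ^ c = 0` for `c ≠ 0` and `0 ^ 0 = 1`);
in particular the left-hand side extends continuously from `Ω` to `P`. -/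
theorem stmt11 {n d : ℕ} (b : Fin d → (Fin n → ℝ)) (α : Fin n → ℝ) (r₀ : Fin d)
    (hroot1 : ∑ i, α i * b r₀ i = 1)
    (hroot2 : ∀ r, r ≠ r₀ → ∑ i, α i * b r i ≤ 0)
    (ℓ : Fin d → (Fin n → ℝ) → ℝ)
    (hℓ : ∀ r x, ℓ r x = (∑ i, x i * b r i) + 1)
    (Ω P : Set (Fin n → ℝ))
    (hΩ : Ω = {x | ∀ r, 0 < ℓ r x})
    (hP : P = {x | ∀ r, 0 ≤ ℓ r x})
    (φ₀ : (Fin n → ℝ) → ℝ)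
    (hφ₀ : ∀ x, φ₀ x = (1 / 2) * ∑ r, ℓ r x * Real.log (ℓ r x))
    (F : (Fin n → ℝ) → ℝ)
    (hF : ∀ x, F x = Real.exp (-(1 / 2) * ∑ r, ∑ i, α i * b r i)
        * (ℓ r₀ x) ^ ((1 : ℝ) / 2)
        * ∏ r ∈ Finset.univ.erase r₀, (ℓ r x) ^ (-(1 / 2) * ∑ i, α i * b r i)) :
    (∀ x ∈ Ω, ℓ r₀ x * Real.exp (-(∑ i, α i * pd φ₀ i x)) = F x)
    ∧ ContinuousOn F P
    ∧ ∃ g : (Fin n → ℝ) → ℝ, ContinuousOn g P ∧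
        ∀ x ∈ Ω, g x = ℓ r₀ x * Real.exp (-(∑ i, α i * pd φ₀ i x)) := by
  classical
  set c : Fin d → ℝ := fun r => ∑ i, α i * b r i with hc
  set T : Fin d → (Fin n → ℝ) →L[ℝ] ℝ :=
    fun r => ∑ i, (b r i) • (ContinuousLinearMap.proj i : (Fin n → ℝ) →L[ℝ] ℝ) with hT
  have hTapp : ∀ r v, T r v = ∑ i, b r i * v i := by
    intro r v
    simp [hT, ContinuousLinearMap.sum_apply]
  have hℓ' : ∀ r, ℓ r = fun x => T r x + 1 := by
    intro r; funext x; rw [hℓ, hTapp]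
    congr 1
    exact Finset.sum_congr rfl fun i _ => mul_comm _ _
  have hLder : ∀ r x, HasFDerivAt (ℓ r) (T r) x := fun r x => by
    rw [hℓ' r]; exact (T r).hasFDerivAt.add_const 1
  have hTsingle : ∀ r i, T r (Pi.single i 1) = b r i := by
    intro r i; rw [hTapp]; simp [Pi.single_apply]
  have hpd : ∀ x ∈ Ω, ∀ i, pd φ₀ i x
      = (1/2 : ℝ) * ∑ r, (Real.log (ℓ r x) + 1) * b r i := by
    intro x hx i
    have hpos : ∀ r, 0 < ℓ r x := by rw [hΩ] at hx; exact hx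
    have hder : HasFDerivAt φ₀ ((1/2 : ℝ) • ∑ r, (Real.log (ℓ r x) + 1) • T r) x := by
      have h1 : ∀ r : Fin d, HasFDerivAt (fun y => ℓ r y * Real.log (ℓ r y))
          ((Real.log (ℓ r x) + 1) • T r) x := by
        intro r
        have h := (hLder r x).mul ((hLder r x).log (hpos r).ne')
        refine h.congr_fderiv ?_
        rw [smul_smul, mul_inv_cancel₀ (hpos r).ne', add_smul, one_smul]
        abel
      have hsum := HasFDerivAt.fun_sum (u := Finset.univ) (fun r _ => h1 r)
      have hmul := hsum.const_mul (1/2 : ℝ)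
      have hfun : φ₀ = fun y => (1/2 : ℝ) * ∑ r, ℓ r y * Real.log (ℓ r y) := funext hφ₀
      rw [hfun]; exact hmul
    rw [pd, hder.fderiv]
    simp [ContinuousLinearMap.sum_apply, hTsingle, Finset.mul_sum]
  have heq : ∀ x ∈ Ω, ℓ r₀ x * Real.exp (-(∑ i, α i * pd φ₀ i x)) = F x := by
    intro x hx
    have hpos : ∀ r, 0 < ℓ r x := by rw [hΩ] at hx; exact hx
    have hS : ∑ i, α i * pd φ₀ i x
        = (1/2 : ℝ) * ∑ r, (Real.log (ℓ r x) + 1) * c r := by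
      have h1 : ∀ i, α i * pd φ₀ i x
          = ∑ r, (1/2 : ℝ) * ((Real.log (ℓ r x) + 1) * (α i * b r i)) := by
        intro i
        rw [hpd x hx i, Finset.mul_sum, Finset.mul_sum]
        exact Finset.sum_congr rfl fun r _ => by ring
      rw [Finset.sum_congr rfl fun i _ => h1 i, Finset.sum_comm, Finset.mul_sum]
      refine Finset.sum_congr rfl fun r _ => ?_
      rw [hc]
      simp only [Finset.mul_sum]
    have hprod : ∀ r : Fin d, (ℓ r x) ^ (-(1/2 : ℝ) * c r)
        = Real.exp (Real.log (ℓ r x) * (-(1/2 : ℝ) * c r)) := fun r =>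
      Real.rpow_def_of_pos (hpos r) _
    have hsplit : ∑ r, (Real.log (ℓ r x) + 1) * c r
        = (∑ r, Real.log (ℓ r x) * c r) + ∑ r, c r := by
      rw [← Finset.sum_add_distrib]
      exact Finset.sum_congr rfl fun r _ => by ring
    have h2 : ∑ r, Real.log (ℓ r x) * (-(1/2 : ℝ) * c r)
        = -(1/2 : ℝ) * ∑ r, Real.log (ℓ r x) * c r := by
      rw [Finset.mul_sum]
      exact Finset.sum_congr rfl fun r _ => by ring
    have harg : -(∑ i, α i * pd φ₀ i x)
        = -(1/2 : ℝ) * ∑ r, c r + ∑ r, Real.log (ℓ r x) * (-(1/2 : ℝ) * c r) := by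
      rw [hS, hsplit, h2]; ring
    have hexp : Real.exp (-(∑ i, α i * pd φ₀ i x))
        = Real.exp (-(1/2 : ℝ) * ∑ r, c r) * ∏ r, (ℓ r x) ^ (-(1/2 : ℝ) * c r) := by
      rw [harg, Real.exp_add, Finset.prod_congr rfl fun r _ => hprod r, ← Real.exp_sum]
    have hc0 : c r₀ = 1 := hroot1
    have hprodsplit : ∏ r, (ℓ r x) ^ (-(1/2 : ℝ) * c r)
        = (ℓ r₀ x) ^ (-(1/2 : ℝ)) * ∏ r ∈ Finset.univ.erase r₀, (ℓ r x) ^ (-(1/2 : ℝ) * c r) := by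
      rw [← Finset.mul_prod_erase Finset.univ _ (Finset.mem_univ r₀), hc0]
      norm_num
    have hhalf : ℓ r₀ x * (ℓ r₀ x) ^ (-(1/2 : ℝ)) = (ℓ r₀ x) ^ ((1:ℝ)/2) := by
      have h := Real.rpow_add (hpos r₀) 1 (-(1/2 : ℝ))
      rw [Real.rpow_one] at h
      rw [← h]; norm_num
    rw [hexp, hprodsplit, hF]
    rw [show ∀ A B C D : ℝ, A * (B * (C * D)) = (B * (A * C)) * D by intros; ring]
    rw [hhalf, hc]
  have hcont : Continuous F := by
      have hFfun : F = fun x => Real.exp (-(1/2 : ℝ) * ∑ r, ∑ i, α i * b r i)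
          * (ℓ r₀ x) ^ ((1 : ℝ) / 2)
          * ∏ r ∈ Finset.univ.erase r₀, (ℓ r x) ^ (-(1/2 : ℝ) * ∑ i, α i * b r i) :=
        funext hF
      have hℓcont : ∀ r, Continuous (ℓ r) := fun r => by
        rw [hℓ' r]; exact ((T r).continuous).add continuous_const
      have hrpow : ∀ e : ℝ, 0 ≤ e → Continuous (fun y : ℝ => y ^ e) := fun e he =>
        continuous_iff_continuousAt.2 fun y => Real.continuousAt_rpow_const y e (Or.inr he)
      rw [hFfun]
      refine Continuous.mul (Continuous.mul continuous_const ?_) ?_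
      · exact (hrpow _ (by norm_num)).comp (hℓcont r₀)
      · refine continuous_finset_prod _ fun r hr => ?_
        have hle : (∑ i, α i * b r i) ≤ 0 :=
          hroot2 r (Finset.ne_of_mem_erase hr)
        exact (hrpow _ (by linarith)).comp (hℓcont r)
  exact ⟨heq, hcont.continuousOn, F, hcont.continuousOn, fun x hx => (heq x hx).symm⟩
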